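/- Let A ∈ ℝ^{n×n} satisfy ‖e^{A t}‖ ≤ β e^{-α t} for all t ≥ 0 with α, β > 0 (operator norm). Let Γ_B = ‖B Bᵀ‖, Γ_H = ‖H‖², Γ_N = ∑_{k=1}^m ‖N_k‖². Define the sequence P_k of PSD matrices by A P₁ + P₁ Aᵀ + B Bᵀ = 0 and A P_k + P_k Aᵀ + H (P_{k-1} ⊗ P_{k-1}) Hᵀ + ∑_j N_j P_{k-1} N_jᵀ + B Bᵀ = 0. Then ‖P₁‖ ≤ β² Γ_B/(2α) and ‖P_k‖ ≤ (β²/(2α)) (Γ_H ‖P_{k-1}‖² + Γ_N ‖P_{k-1}‖ + Γ_B) for all k ≥ 2. -/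

import Mathlib

open Matrix Kronecker
open scoped Matrix.Norms.L2Operator

lemma euclid_norm_sq {k : Type*} [Fintype k] (v : k → ℝ) :
    ‖(WithLp.equiv 2 (k → ℝ)).symm v‖ ^ 2 = ∑ i, (v i) ^ 2 := by
  rw [EuclideanSpace.norm_eq, Real.sq_sqrt (by positivity)]
  simp [Real.norm_eq_abs, sq_abs]

lemma frob_mul_left {a b c : Type*} [Fintype a] [Fintype b] [Fintype c] [DecidableEq b]
    (X : Matrix a b ℝ) (V : Matrix b c ℝ) :
    ∑ j, ∑ i, ((X * V) i j) ^ 2 ≤ ‖X‖ ^ 2 * ∑ j, ∑ i, (V i j) ^ 2 := by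
  rw [Finset.mul_sum]
  refine Finset.sum_le_sum fun j _ => ?_
  have h := Matrix.l2_opNorm_mulVec X ((WithLp.equiv 2 (b → ℝ)).symm (fun i => V i j))
  have h2 : (EuclideanSpace.equiv a ℝ).symm
        (X *ᵥ ((WithLp.equiv 2 (b → ℝ)).symm fun i => V i j))
      = (WithLp.equiv 2 (a → ℝ)).symm (fun i => (X * V) i j) := by
    ext i
    simp [Matrix.mulVec, Matrix.mul_apply, dotProduct]
  rw [h2] at h
  calc ∑ i, ((X * V) i j) ^ 2
      = ‖(WithLp.equiv 2 (a → ℝ)).symm (fun i => (X * V) i j)‖ ^ 2 := (euclid_norm_sq _).symm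
    _ ≤ (‖X‖ * ‖(WithLp.equiv 2 (b → ℝ)).symm (fun i => V i j)‖) ^ 2 := by
        exact pow_le_pow_left₀ (norm_nonneg _) h 2
    _ = ‖X‖ ^ 2 * ∑ i, (V i j) ^ 2 := by rw [mul_pow, euclid_norm_sq]

lemma kron_opNorm_le {a b c d : Type*} [Fintype a] [Fintype b] [Fintype c] [Fintype d]
    [DecidableEq b] [DecidableEq d]
    (X : Matrix a b ℝ) (Y : Matrix c d ℝ) :
    ‖X ⊗ₖ Y‖ ≤ ‖X‖ * ‖Y‖ := by
  rw [Matrix.l2_opNorm_def]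
  refine ContinuousLinearMap.opNorm_le_bound _ (by positivity) fun v => ?_
  set V : Matrix b d ℝ := fun k l => v (k, l) with hV
  have key : ∀ p : a × c, ((X ⊗ₖ Y) *ᵥ (WithLp.equiv 2 ((b × d) → ℝ)) v) p
      = (X * V * Yᵀ) p.1 p.2 := by
    rintro ⟨i, j⟩
    simp only [Matrix.mulVec, dotProduct, Matrix.mul_apply, Matrix.kroneckerMap_apply,
      Matrix.transpose_apply, Fintype.sum_prod_type, Finset.sum_mul, Finset.mul_sum]
    rw [Finset.sum_comm]
    refine Finset.sum_congr rfl fun k _ => Finset.sum_congr rfl fun l _ => ?_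
    simp [hV]
    ring
  have lhs_eq : ‖(Matrix.toEuclideanLin.trans LinearMap.toContinuousLinearMap) (X ⊗ₖ Y) v‖ ^ 2
      = ∑ j, ∑ i, ((X * V * Yᵀ) i j) ^ 2 := by
    have : (Matrix.toEuclideanLin.trans LinearMap.toContinuousLinearMap) (X ⊗ₖ Y) v
        = (WithLp.equiv 2 ((a × c) → ℝ)).symm
            (fun p => (X * V * Yᵀ) p.1 p.2) := by
      ext p
      simpa using key p
    rw [this, euclid_norm_sq, Fintype.sum_prod_type, Finset.sum_comm]
  have hv2 : ‖v‖ ^ 2 = ∑ l, ∑ k, (V k l) ^ 2 := by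
    have : v = (WithLp.equiv 2 ((b × d) → ℝ)).symm ((WithLp.equiv 2 ((b × d) → ℝ)) v) := by simp
    rw [this, euclid_norm_sq, Fintype.sum_prod_type, Finset.sum_comm]
    simp [hV]
  have step1 := frob_mul_left X (V * Yᵀ)
  have step2 : ∑ j, ∑ i, ((V * Yᵀ) i j) ^ 2 ≤ ‖Y‖ ^ 2 * ∑ l, ∑ k, (V k l) ^ 2 := by
    have := frob_mul_left Y Vᵀ
    have e1 : ∀ i j, (V * Yᵀ) i j = (Y * Vᵀ) j i := by
      intro i j; simp [Matrix.mul_apply, mul_comm]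
    calc ∑ j, ∑ i, ((V * Yᵀ) i j) ^ 2 = ∑ j, ∑ i, ((Y * Vᵀ) j i) ^ 2 := by
          simp_rw [e1]
      _ = ∑ i, ∑ j, ((Y * Vᵀ) j i) ^ 2 := Finset.sum_comm
      _ ≤ ‖Y‖ ^ 2 * ∑ i, ∑ j, (Vᵀ j i) ^ 2 := this
      _ = ‖Y‖ ^ 2 * ∑ l, ∑ k, (V k l) ^ 2 := by
          congr 1
          exact Finset.sum_comm.trans (by simp [Matrix.transpose_apply])
  have final : ‖(Matrix.toEuclideanLin.trans LinearMap.toContinuousLinearMap) (X ⊗ₖ Y) v‖ ^ 2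
      ≤ (‖X‖ * ‖Y‖ * ‖v‖) ^ 2 := by
    rw [lhs_eq]
    simp_rw [Matrix.mul_assoc X V Yᵀ]
    calc ∑ j, ∑ i, ((X * (V * Yᵀ)) i j) ^ 2 ≤ ‖X‖ ^ 2 * ∑ j, ∑ i, ((V * Yᵀ) i j) ^ 2 := step1
      _ ≤ ‖X‖ ^ 2 * (‖Y‖ ^ 2 * ∑ l, ∑ k, (V k l) ^ 2) := by
          exact mul_le_mul_of_nonneg_left step2 (by positivity)
      _ = (‖X‖ * ‖Y‖ * ‖v‖) ^ 2 := by rw [← hv2]; ring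
  have h1 : (0:ℝ) ≤ ‖(Matrix.toEuclideanLin.trans LinearMap.toContinuousLinearMap) (X ⊗ₖ Y) v‖ :=
    norm_nonneg _
  have h2 : (0:ℝ) ≤ ‖X‖ * ‖Y‖ * ‖v‖ := by positivity
  nlinarith [final, h1, h2]


lemma lyap_bound {n : ℕ} (A P M : Matrix (Fin n) (Fin n) ℝ) (α β : ℝ) (hα : 0 < α) (hβ : 0 < β)
    (hexp : ∀ t : ℝ, 0 ≤ t → ‖NormedSpace.exp (t • A)‖ ≤ β * Real.exp (-α * t))
    (heq : A * P + P * Aᵀ + M = 0) :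
    ‖P‖ ≤ β ^ 2 * ‖M‖ / (2 * α) := by
  have hM : A * P + P * Aᵀ = -M := by
    rw [add_eq_zero_iff_eq_neg] at heq; exact heq
  set E : ℝ → Matrix (Fin n) (Fin n) ℝ := fun t => NormedSpace.exp (t • A) with hE
  have hEderiv : ∀ t : ℝ, HasDerivAt E (A * E t) t := fun t =>
    hasDerivAt_exp_smul_const' (𝕂 := ℝ) A t
  set T : Matrix (Fin n) (Fin n) ℝ →L[ℝ] Matrix (Fin n) (Fin n) ℝ :=
    LinearMap.toContinuousLinearMap
      ((Matrix.transposeLinearEquiv (Fin n) (Fin n) ℝ ℝ).toLinearMap) with hT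
  have hTapp : ∀ X : Matrix (Fin n) (Fin n) ℝ, T X = Xᵀ := fun X => rfl
  have hETderiv : ∀ t : ℝ, HasDerivAt (fun t => (E t)ᵀ) ((A * E t)ᵀ) t := by
    intro t
    have := T.hasFDerivAt.comp_hasDerivAt t (hEderiv t)
    exact this
  have hcomm : ∀ t : ℝ, A * E t = E t * A := fun t =>
    (((Commute.refl A).smul_right t).exp_right).eq
  have hfderiv : ∀ t : ℝ, HasDerivAt (fun t => E t * P * (E t)ᵀ)
      (-(E t * M * (E t)ᵀ)) t := by
    intro t
    have h1 : HasDerivAt (fun t => E t * P) (A * E t * P) t := (hEderiv t).mul_const P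
    have h2 := h1.mul (hETderiv t)
    have hrw : A * E t * P * (E t)ᵀ + E t * P * (A * E t)ᵀ = -(E t * M * (E t)ᵀ) := by
      rw [hcomm t, Matrix.transpose_mul]
      have expand : E t * A * P * (E t)ᵀ + E t * P * (Aᵀ * (E t)ᵀ)
          = E t * (A * P + P * Aᵀ) * (E t)ᵀ := by noncomm_ring
      rw [expand, hM]
      noncomm_ring
    rw [← hrw]
    exact h2
  have hEcont : Continuous E := Differentiable.continuous (fun t => (hEderiv t).differentiableAt)
  have hTE : Continuous fun t => (E t)ᵀ := T.continuous.comp hEcont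
  have hgcont : Continuous fun t => E t * M * (E t)ᵀ :=
    (hEcont.mul continuous_const).mul hTE
  have htransnorm : ∀ X : Matrix (Fin n) (Fin n) ℝ, ‖Xᵀ‖ = ‖X‖ := fun X => by
    rw [← Matrix.conjTranspose_eq_transpose_of_trivial, Matrix.l2_opNorm_conjTranspose]
  have hexpsq : ∀ t : ℝ, Real.exp (-(2*α)*t) = Real.exp (-α*t) * Real.exp (-α*t) := by
    intro t; rw [← Real.exp_add]; ring_nf
  have key : ∀ u : ℝ, 0 ≤ u →
      ‖P‖ ≤ β ^ 2 * Real.exp (-(2*α)*u) * ‖P‖ + β ^ 2 * ‖M‖ / (2 * α) := by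
    intro u hu
    have hftc := intervalIntegral.integral_eq_sub_of_hasDerivAt
      (f := fun t => E t * P * (E t)ᵀ) (f' := fun t => -(E t * M * (E t)ᵀ))
      (fun t _ => hfderiv t) ((hgcont.neg).intervalIntegrable 0 u)
    rw [intervalIntegral.integral_neg] at hftc
    have hf0 : E 0 * P * (E 0)ᵀ = P := by
      simp [hE, NormedSpace.exp_zero]
    have hPeq : P = E u * P * (E u)ᵀ + ∫ t in (0:ℝ)..u, E t * M * (E t)ᵀ := by
      have h2 : (∫ t in (0:ℝ)..u, E t * M * (E t)ᵀ)
          = E 0 * P * (E 0)ᵀ - E u * P * (E u)ᵀ := by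
        have h3 := congrArg Neg.neg hftc
        simp only [neg_neg, neg_sub] at h3
        exact h3
      rw [h2, hf0]
      abel
    have hnormfu : ‖E u * P * (E u)ᵀ‖ ≤ β ^ 2 * Real.exp (-(2*α)*u) * ‖P‖ := by
      have h1 : ‖E u * P * (E u)ᵀ‖ ≤ ‖E u‖ * ‖P‖ * ‖E u‖ := by
        calc ‖E u * P * (E u)ᵀ‖ ≤ ‖E u * P‖ * ‖(E u)ᵀ‖ := norm_mul_le _ _
          _ ≤ ‖E u‖ * ‖P‖ * ‖(E u)ᵀ‖ :=
              mul_le_mul_of_nonneg_right (norm_mul_le _ _) (norm_nonneg _)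
          _ = ‖E u‖ * ‖P‖ * ‖E u‖ := by rw [htransnorm]
      have h2 : ‖E u‖ ≤ β * Real.exp (-α * u) := hexp u hu
      have h3 : (0:ℝ) ≤ Real.exp (-α*u) := (Real.exp_pos _).le
      have h4 : (0:ℝ) ≤ ‖E u‖ := norm_nonneg _
      have h5 : (0:ℝ) ≤ ‖P‖ := norm_nonneg _
      rw [hexpsq]
      have h6 : ‖E u‖ * ‖E u‖ * ‖P‖ ≤ (β * Real.exp (-α*u)) * (β * Real.exp (-α*u)) * ‖P‖ :=
        mul_le_mul_of_nonneg_right (mul_self_le_mul_self h4 h2) h5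
      nlinarith [h1, h6]
    have hbound : ∀ t ∈ Set.Icc (0:ℝ) u, ‖E t * M * (E t)ᵀ‖ ≤
        β ^ 2 * ‖M‖ * Real.exp (-(2*α)*t) := by
      intro t ht
      have hht : (0:ℝ) ≤ t := ht.1
      have h1 : ‖E t * M * (E t)ᵀ‖ ≤ ‖E t‖ * ‖M‖ * ‖E t‖ := by
        calc ‖E t * M * (E t)ᵀ‖ ≤ ‖E t * M‖ * ‖(E t)ᵀ‖ := norm_mul_le _ _
          _ ≤ ‖E t‖ * ‖M‖ * ‖(E t)ᵀ‖ :=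
              mul_le_mul_of_nonneg_right (norm_mul_le _ _) (norm_nonneg _)
          _ = ‖E t‖ * ‖M‖ * ‖E t‖ := by rw [htransnorm]
      have h2 : ‖E t‖ ≤ β * Real.exp (-α * t) := hexp t hht
      have h3 : (0:ℝ) ≤ Real.exp (-α*t) := (Real.exp_pos _).le
      have h4 : (0:ℝ) ≤ ‖E t‖ := norm_nonneg _
      have h5 : (0:ℝ) ≤ ‖M‖ := norm_nonneg _
      rw [hexpsq]
      have h6 : ‖E t‖ * ‖E t‖ * ‖M‖ ≤ (β * Real.exp (-α*t)) * (β * Real.exp (-α*t)) * ‖M‖ :=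
        mul_le_mul_of_nonneg_right (mul_self_le_mul_self h4 h2) h5
      nlinarith [h1, h6]
    have hbcont : Continuous fun t => β ^ 2 * ‖M‖ * Real.exp (-(2*α)*t) := by fun_prop
    have hintle : ‖∫ t in (0:ℝ)..u, E t * M * (E t)ᵀ‖ ≤
        ∫ t in (0:ℝ)..u, β ^ 2 * ‖M‖ * Real.exp (-(2*α)*t) := by
      calc ‖∫ t in (0:ℝ)..u, E t * M * (E t)ᵀ‖
          ≤ ∫ t in (0:ℝ)..u, ‖E t * M * (E t)ᵀ‖ :=
            intervalIntegral.norm_integral_le_integral_norm hu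
        _ ≤ ∫ t in (0:ℝ)..u, β ^ 2 * ‖M‖ * Real.exp (-(2*α)*t) :=
            intervalIntegral.integral_mono_on hu
              ((hgcont.norm).intervalIntegrable 0 u)
              (hbcont.intervalIntegrable 0 u) hbound
    have hF : ∀ t : ℝ, HasDerivAt
        (fun t => -(β ^ 2 * ‖M‖ / (2*α)) * Real.exp (-(2*α)*t))
        (β ^ 2 * ‖M‖ * Real.exp (-(2*α)*t)) t := by
      intro t
      have hlin : HasDerivAt (fun y : ℝ => -(2*α)*y) (-(2*α)) t := by
        simpa using (hasDerivAt_id t).const_mul (-(2*α))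
      have h2 := hlin.exp.const_mul (-(β ^ 2 * ‖M‖ / (2*α)))
      have heq2 : -(β ^ 2 * ‖M‖ / (2*α)) * (Real.exp (-(2*α)*t) * (-(2*α)))
          = β ^ 2 * ‖M‖ * Real.exp (-(2*α)*t) := by
        field_simp
      rw [heq2] at h2
      exact h2
    have hintval : ∫ t in (0:ℝ)..u, β ^ 2 * ‖M‖ * Real.exp (-(2*α)*t)
        = -(β ^ 2 * ‖M‖ / (2*α)) * Real.exp (-(2*α)*u)
          + β ^ 2 * ‖M‖ / (2*α) := by
      rw [intervalIntegral.integral_eq_sub_of_hasDerivAt (fun t _ => hF t)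
        (hbcont.intervalIntegrable 0 u)]
      simp only [mul_zero, Real.exp_zero, mul_one]
      ring
    have hintle2 : ‖∫ t in (0:ℝ)..u, E t * M * (E t)ᵀ‖ ≤ β ^ 2 * ‖M‖ / (2 * α) := by
      rw [hintval] at hintle
      have h6 : (0:ℝ) ≤ β ^ 2 * ‖M‖ / (2*α) := by positivity
      have h7 : (0:ℝ) ≤ Real.exp (-(2*α)*u) := (Real.exp_pos _).le
      nlinarith [hintle]
    calc ‖P‖ = ‖E u * P * (E u)ᵀ + ∫ t in (0:ℝ)..u, E t * M * (E t)ᵀ‖ := by rw [← hPeq]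
      _ ≤ ‖E u * P * (E u)ᵀ‖ + ‖∫ t in (0:ℝ)..u, E t * M * (E t)ᵀ‖ := norm_add_le _ _
      _ ≤ β ^ 2 * Real.exp (-(2*α)*u) * ‖P‖ + β ^ 2 * ‖M‖ / (2 * α) :=
          add_le_add hnormfu hintle2
  -- take the limit u → ∞
  have htends : Filter.Tendsto
      (fun u => β ^ 2 * Real.exp (-(2*α)*u) * ‖P‖ + β ^ 2 * ‖M‖ / (2 * α))
      Filter.atTop (nhds (β ^ 2 * 0 * ‖P‖ + β ^ 2 * ‖M‖ / (2 * α))) := by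
    apply Filter.Tendsto.add _ tendsto_const_nhds
    apply Filter.Tendsto.mul_const
    apply Filter.Tendsto.const_mul
    have h1 : Filter.Tendsto (fun u : ℝ => (2*α) * u) Filter.atTop Filter.atTop :=
      Filter.Tendsto.const_mul_atTop (by positivity) Filter.tendsto_id
    have h2 := Real.tendsto_exp_neg_atTop_nhds_zero.comp h1
    refine h2.congr fun x => ?_
    simp [Function.comp, neg_mul]
  have := ge_of_tendsto htends (Filter.eventually_atTop.mpr ⟨0, fun u hu => key u hu⟩)
  simpa using this

lemma transpose_opNorm {a b : Type*} [Fintype a] [Fintype b] [DecidableEq a] [DecidableEq b]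
    (X : Matrix a b ℝ) : ‖Xᵀ‖ = ‖X‖ := by
  rw [← Matrix.conjTranspose_eq_transpose_of_trivial, Matrix.l2_opNorm_conjTranspose]

/-- If `‖e^{At}‖ ≤ β e^{-αt}` for `t ≥ 0` and the PSD matrices
`P_k` solve the fixed-point Lyapunov equations of the QB Gramian iteration, then
`‖P₁‖ ≤ β²Γ_B/(2α)` and
`‖P_k‖ ≤ (β²/(2α))(Γ_H ‖P_{k-1}‖² + Γ_N ‖P_{k-1}‖ + Γ_B)` for `k ≥ 2`, where
`Γ_B = ‖BBᵀ‖`, `Γ_H = ‖H‖²`, `Γ_N = ∑ₖ ‖Nₖ‖²` (operator norms). -/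
theorem stmt14 {n m : ℕ} (A : Matrix (Fin n) (Fin n) ℝ)
    (B : Matrix (Fin n) (Fin m) ℝ)
    (H : Matrix (Fin n) (Fin n × Fin n) ℝ)
    (N : Fin m → Matrix (Fin n) (Fin n) ℝ)
    (α β : ℝ) (hα : 0 < α) (hβ : 0 < β)
    (hexp : ∀ t : ℝ, 0 ≤ t →
      ‖NormedSpace.exp (t • A)‖ ≤ β * Real.exp (-α * t))
    (P : ℕ → Matrix (Fin n) (Fin n) ℝ)
    (hpsd : ∀ k, 1 ≤ k → (P k).PosSemidef)
    (h1 : A * P 1 + P 1 * Aᵀ + B * Bᵀ = 0)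
    (hk : ∀ k, 2 ≤ k →
      A * P k + P k * Aᵀ + H * (P (k - 1) ⊗ₖ P (k - 1)) * Hᵀ
        + ∑ j, N j * P (k - 1) * (N j)ᵀ + B * Bᵀ = 0) :
    ‖P 1‖ ≤ β ^ 2 * ‖B * Bᵀ‖ / (2 * α) ∧
    ∀ k, 2 ≤ k →
      ‖P k‖ ≤ β ^ 2 / (2 * α) *
        (‖H‖ ^ 2 * ‖P (k - 1)‖ ^ 2 + (∑ j, ‖N j‖ ^ 2) * ‖P (k - 1)‖
          + ‖B * Bᵀ‖) := by
  constructor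
  · exact lyap_bound A (P 1) (B * Bᵀ) α β hα hβ hexp h1
  · intro k hk2
    set Q := P (k - 1) with hQ
    have heq : A * P k + P k * Aᵀ +
        (H * (Q ⊗ₖ Q) * Hᵀ + (∑ j, N j * Q * (N j)ᵀ) + B * Bᵀ) = 0 := by
      have h := hk k hk2
      rw [← h]
      abel
    have hb := lyap_bound A (P k) _ α β hα hβ hexp heq
    have hMle : ‖H * (Q ⊗ₖ Q) * Hᵀ + (∑ j, N j * Q * (N j)ᵀ) + B * Bᵀ‖
        ≤ ‖H‖ ^ 2 * ‖Q‖ ^ 2 + (∑ j, ‖N j‖ ^ 2) * ‖Q‖ + ‖B * Bᵀ‖ := by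
      have t1 : ‖H * (Q ⊗ₖ Q) * Hᵀ‖ ≤ ‖H‖ ^ 2 * ‖Q‖ ^ 2 := by
        calc ‖H * (Q ⊗ₖ Q) * Hᵀ‖ ≤ ‖H * (Q ⊗ₖ Q)‖ * ‖Hᵀ‖ := Matrix.l2_opNorm_mul _ _
          _ ≤ ‖H‖ * ‖Q ⊗ₖ Q‖ * ‖Hᵀ‖ :=
              mul_le_mul_of_nonneg_right (Matrix.l2_opNorm_mul _ _) (norm_nonneg _)
          _ = ‖H‖ * ‖Q ⊗ₖ Q‖ * ‖H‖ := by rw [transpose_opNorm]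
          _ ≤ ‖H‖ * (‖Q‖ * ‖Q‖) * ‖H‖ :=
              mul_le_mul_of_nonneg_right
                (mul_le_mul_of_nonneg_left (kron_opNorm_le Q Q) (norm_nonneg H))
                (norm_nonneg H)
          _ = ‖H‖ ^ 2 * ‖Q‖ ^ 2 := by ring
      have t2 : ‖∑ j, N j * Q * (N j)ᵀ‖ ≤ (∑ j, ‖N j‖ ^ 2) * ‖Q‖ := by
        calc ‖∑ j, N j * Q * (N j)ᵀ‖ ≤ ∑ j, ‖N j * Q * (N j)ᵀ‖ := norm_sum_le _ _
          _ ≤ ∑ j, ‖N j‖ ^ 2 * ‖Q‖ := by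
              refine Finset.sum_le_sum fun j _ => ?_
              calc ‖N j * Q * (N j)ᵀ‖ ≤ ‖N j * Q‖ * ‖(N j)ᵀ‖ := Matrix.l2_opNorm_mul _ _
                _ ≤ ‖N j‖ * ‖Q‖ * ‖(N j)ᵀ‖ :=
                    mul_le_mul_of_nonneg_right (Matrix.l2_opNorm_mul _ _) (norm_nonneg _)
                _ = ‖N j‖ ^ 2 * ‖Q‖ := by rw [transpose_opNorm]; ring
          _ = (∑ j, ‖N j‖ ^ 2) * ‖Q‖ := by rw [Finset.sum_mul]
      calc ‖H * (Q ⊗ₖ Q) * Hᵀ + (∑ j, N j * Q * (N j)ᵀ) + B * Bᵀ‖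
          ≤ ‖H * (Q ⊗ₖ Q) * Hᵀ + (∑ j, N j * Q * (N j)ᵀ)‖ + ‖B * Bᵀ‖ := norm_add_le _ _
        _ ≤ ‖H * (Q ⊗ₖ Q) * Hᵀ‖ + ‖∑ j, N j * Q * (N j)ᵀ‖ + ‖B * Bᵀ‖ := by
            have := norm_add_le (H * (Q ⊗ₖ Q) * Hᵀ) (∑ j, N j * Q * (N j)ᵀ)
            linarith
        _ ≤ ‖H‖ ^ 2 * ‖Q‖ ^ 2 + (∑ j, ‖N j‖ ^ 2) * ‖Q‖ + ‖B * Bᵀ‖ := by linarith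
    refine hb.trans ?_
    calc β ^ 2 * ‖H * (Q ⊗ₖ Q) * Hᵀ + (∑ j, N j * Q * (N j)ᵀ) + B * Bᵀ‖ / (2 * α)
        = β ^ 2 / (2 * α) * ‖H * (Q ⊗ₖ Q) * Hᵀ + (∑ j, N j * Q * (N j)ᵀ) + B * Bᵀ‖ := by
          ring
      _ ≤ β ^ 2 / (2 * α) *
          (‖H‖ ^ 2 * ‖Q‖ ^ 2 + (∑ j, ‖N j‖ ^ 2) * ‖Q‖ + ‖B * Bᵀ‖) :=
          mul_le_mul_of_nonneg_left hMle (by positivity)
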